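/- Assume A ≠ 0, set x₁ = ζ/A, and assume E := αζˢ/(C·x₁) + αˢ + Dα/C ≠ 0. Then the point v₃ (coex-1) with coordinates x₁ = ζ/A, x₂ = 0, zˢ = (1 − x₁)/E, z = (1 − x₁ − αˢ·zˢ)/α, y₁ = (C/μ)·x₁·z, y₂ = 0, yˢ = (x₁/γˢ)·(C·z + αˢ·zˢ) is an equilibrium of F, i.e. F(v₃) = 0. -/

import Mathlib

theorem v₃_coex_1_is_equilibrium
    (α αs β₁ β₂ μ γs γ₁ γ₂ κ₁ κ₂ ν νs ζs ζ : ℝ)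
    (hα : 0 < α) (hαs : 0 < αs) (hβ₁pos : 0 < β₁) (hβ₂pos : 0 < β₂)
    (hμ : 0 < μ) (hγs : 0 < γs) (hγ₁ : 0 < γ₁) (hγ₂ : 0 < γ₂)
    (hκ₁ : 0 < κ₁) (hκ₂ : 0 < κ₂) (hν : 0 < ν) (hνs : 0 < νs)
    (hζs : 0 < ζs) (hζ : 0 < ζ)
    (A : ℝ) (hA : A = α * (γ₁ * κ₁ / (μ + γ₁) - ν))
    (C : ℝ) (hC : C = α * μ / (μ + γ₁))
    (D : ℝ) (hD : D = αs * (νs - 1))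
    (hA0 : A ≠ 0)
    (x₁ x₂ ys y₁ y₂ zs z : ℝ)
    (hx₁ : x₁ = ζ / A)
    (hE : α * ζs / (C * x₁) + αs + D * α / C ≠ 0)
    (hx₂ : x₂ = 0)
    (hzs : zs = (1 - x₁) / (α * ζs / (C * x₁) + αs + D * α / C))
    (hz : z = (1 - x₁ - αs * zs) / α)
    (hy₁ : y₁ = (C / μ) * x₁ * z) (hy₂ : y₂ = 0)
    (hys : ys = (x₁ / γs) * (C * z + αs * zs)) :
    x₁ * (1 - x₁ - x₂) - α * x₁ * z - αs * x₁ * zs = 0 ∧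
    x₂ * (β₁ - β₂ * (x₁ + x₂)) - α * x₂ * z = 0 ∧
    αs * zs * x₁ + μ * y₁ - γs * ys = 0 ∧
    α * z * x₁ - (μ + γ₁) * y₁ = 0 ∧
    α * z * x₂ - γ₂ * y₂ = 0 ∧
    γs * ys - νs * αs * zs * x₁ - ζs * zs = 0 ∧
    κ₁ * γ₁ * y₁ + κ₂ * γ₂ * y₂ - ν * α * z * (x₁ + x₂) - ζ * z = 0 := by
  have hμγ : μ + γ₁ ≠ 0 := by positivity
  have hC0 : C ≠ 0 := by rw [hC]; positivity
  have hx10 : x₁ ≠ 0 := by rw [hx₁]; exact div_ne_zero hζ.ne' hA0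
  have hAx : A * x₁ = ζ := by rw [hx₁]; field_simp
  have h1 : zs * (α * ζs / (C * x₁) + αs + D * α / C) = 1 - x₁ := by
    rw [hzs]; exact div_mul_cancel₀ (1 - x₁) hE
  have h2 : zs * (α * ζs + αs * (C * x₁) + D * α * x₁) = (1 - x₁) * (C * x₁) := by
    apply mul_left_cancel₀ hC0
    field_simp at h1
    linear_combination C * h1
  have hαz : α * z = 1 - x₁ - αs * zs := by rw [hz]; field_simp
  have key : C * x₁ * z = zs * (ζs + D * x₁) := by
    apply mul_left_cancel₀ hα.ne'
    linear_combination C * x₁ * hαz - h2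
  have hy₁' : μ * y₁ = C * x₁ * z := by rw [hy₁]; field_simp
  have hys' : γs * ys = x₁ * (C * z + αs * zs) := by rw [hys]; field_simp
  have hC' : C * (μ + γ₁) = α * μ := by rw [hC]; exact div_mul_cancel₀ _ hμγ
  have hA' : A * (μ + γ₁) = α * (γ₁ * κ₁ - ν * (μ + γ₁)) := by
    have h := div_mul_cancel₀ (γ₁ * κ₁) hμγ
    rw [hA]; linear_combination α * h
  refine ⟨?_, ?_, ?_, ?_, ?_, ?_, ?_⟩
  · rw [hx₂]; linear_combination (-x₁) * hαz
  · rw [hx₂]; ring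
  · linear_combination hy₁' - hys'
  · have h4 : μ * (α * z * x₁ - (μ + γ₁) * y₁) = 0 := by
      linear_combination (-(μ + γ₁)) * hy₁' - x₁ * z * hC'
    exact (mul_eq_zero.mp h4).resolve_left hμ.ne'
  · rw [hx₂, hy₂]; ring
  · linear_combination hys' + key + zs * x₁ * hD
  · rw [hy₂, hx₂]
    have h7 : μ * (μ + γ₁) * (κ₁ * γ₁ * y₁ - ν * α * z * x₁ - ζ * z) = 0 := by
      linear_combination κ₁ * γ₁ * (μ + γ₁) * hy₁' + κ₁ * γ₁ * x₁ * z * hC' - μ * x₁ * z * hA' + μ * (μ + γ₁) * z * hAx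
    have h7' : κ₁ * γ₁ * y₁ - ν * α * z * x₁ - ζ * z = 0 :=
      (mul_eq_zero.mp h7).resolve_left (by positivity)
    linear_combination h7'
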